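/- Let N and M be elements of GL(3,ℤ) such that (i) N·M = M·N, (ii) 1 is an eigenvalue of N^n·M^m for every (n,m) ∈ ℤ², and (iii) the only k ∈ ℤ³ satisfying N^n·M^m·k = k for all (n,m) ∈ ℤ² is k = 0. If G is an abelian subgroup of GL(3,ℤ) containing N and M such that 1 is an eigenvalue of every element of G, then G equals the subgroup of GL(3,ℤ) generated by N and M. -/

import Mathlib

open Matrix Polynomial
noncomputable section

abbrev QM (X : Matrix (Fin 3) (Fin 3) ℤ) : Matrix (Fin 3) (Fin 3) ℚ :=
  X.map ((Int.cast) : ℤ → ℚ)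

lemma QM_mul (X Y : Matrix (Fin 3) (Fin 3) ℤ) : QM (X * Y) = QM X * QM Y :=
  Matrix.map_mul (L := X) (M := Y) (f := Int.castRingHom ℚ)

lemma QM_one : QM 1 = 1 := by
  simpa using Matrix.map_one ((Int.cast) : ℤ → ℚ) (by simp) (by simp)

lemma QM_sub_one (X : Matrix (Fin 3) (Fin 3) ℤ) : QM (X - 1) = QM X - 1 := by
  ext i j
  by_cases h : i = j <;> simp [Matrix.one_apply, h]

lemma QM_det (X : Matrix (Fin 3) (Fin 3) ℤ) : (QM X).det = (X.det : ℚ) :=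
  (RingHom.map_det (Int.castRingHom ℚ) X).symm

lemma QM_inj {X Y : Matrix (Fin 3) (Fin 3) ℤ} (h : QM X = QM Y) : X = Y := by
  ext i j
  have := congrFun (congrFun h i) j
  simpa using this

lemma QM_mulVec (X : Matrix (Fin 3) (Fin 3) ℤ) (k : Fin 3 → ℤ) :
    (QM X).mulVec (fun i => (k i : ℚ)) = fun i => ((X.mulVec k) i : ℚ) := by
  funext i
  simp only [Matrix.mulVec, dotProduct, Fin.sum_univ_three, Matrix.map_apply]
  push_cast
  ring

lemma fix_inv (g : GL (Fin 3) ℤ) (k : Fin 3 → ℤ)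
    (h : ((g : Matrix (Fin 3) (Fin 3) ℤ)).mulVec k = k) :
    ((g⁻¹ : GL (Fin 3) ℤ) : Matrix (Fin 3) (Fin 3) ℤ).mulVec k = k := by
  conv_lhs => rw [← h]
  rw [Matrix.mulVec_mulVec, ← Units.val_mul, inv_mul_cancel, Units.val_one, Matrix.one_mulVec]

lemma fix_zpow (g : GL (Fin 3) ℤ) (k : Fin 3 → ℤ)
    (h : ((g : Matrix (Fin 3) (Fin 3) ℤ)).mulVec k = k) (n : ℤ) :
    ((g ^ n : GL (Fin 3) ℤ) : Matrix (Fin 3) (Fin 3) ℤ).mulVec k = k := by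
  induction n using Int.induction_on with
  | zero => simp [Matrix.one_mulVec]
  | succ i ih =>
      have : (g ^ ((i : ℤ) + 1)) = g ^ (i : ℤ) * g := by rw [_root_.zpow_add_one]
      rw [this, Units.val_mul, ← Matrix.mulVec_mulVec, h, ih]
  | pred i ih =>
      have : (g ^ (-(i : ℤ) - 1)) = g ^ (-(i : ℤ)) * g⁻¹ := by rw [_root_.zpow_sub_one]
      rw [this, Units.val_mul, ← Matrix.mulVec_mulVec, fix_inv g k h, ih]

lemma clear_denom (x : ℚ) (D : ℕ) (hdvd : x.den ∣ D) : ∃ z : ℤ, (z : ℚ) = x * D := by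
  obtain ⟨c, hc⟩ := hdvd
  refine ⟨x.num * c, ?_⟩
  have hden : (x.den : ℚ) ≠ 0 := by
    exact_mod_cast (Nat.cast_ne_zero (R := ℚ)).mpr x.den_nz
  have hx : (x.num : ℚ) = x * x.den :=
    ((eq_div_iff hden).mp (Rat.num_div_den x).symm).symm
  push_cast
  rw [hc]
  push_cast
  rw [hx]
  ring

lemma eval_charpoly3 (M : Matrix (Fin 3) (Fin 3) ℚ) (r : ℚ) :
    M.charpoly.eval r = (r • (1 : Matrix (Fin 3) (Fin 3) ℚ) - M).det := by
  rw [Matrix.charpoly, ← Polynomial.coe_evalRingHom, RingHom.map_det]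
  congr 1
  ext i j
  by_cases h : i = j <;>
    simp [Matrix.charmatrix_apply, h, Matrix.one_apply, Matrix.smul_apply, Matrix.sub_apply]

lemma int_eig (X : Matrix (Fin 3) (Fin 3) ℤ) {x : Fin 3 → ℚ} {μ : ℚ} (hx : x ≠ 0)
    (h : (QM X).mulVec x = μ • x) : ∃ a : ℤ, (a : ℚ) = μ := by
  have hker : ((QM X) - μ • 1).mulVec x = 0 := by
    rw [Matrix.sub_mulVec, Matrix.smul_mulVec, Matrix.one_mulVec, h, sub_self]
  have hdet : ((QM X) - μ • 1).det = 0 :=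
    Matrix.exists_mulVec_eq_zero_iff.mp ⟨x, hx, hker⟩
  have heval : (QM X).charpoly.eval μ = 0 := by
    rw [eval_charpoly3]
    rw [← neg_sub, Matrix.det_neg, hdet]
    ring
  have hint : IsIntegral ℤ μ := by
    refine ⟨X.charpoly, X.charpoly_monic, ?_⟩
    rw [← Polynomial.eval_map]

    have : X.charpoly.map (algebraMap ℤ ℚ) = (QM X).charpoly := by
      rw [← Matrix.charpoly_map]
      rfl
    rw [this, heval]
  obtain ⟨a, ha⟩ := IsIntegrallyClosed.isIntegral_iff.mp hint
  exact ⟨a, ha⟩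

lemma unit_eig (g : GL (Fin 3) ℤ) {x : Fin 3 → ℚ} {μ : ℚ} (hx : x ≠ 0)
    (h : (QM ↑g).mulVec x = μ • x) : μ = 1 ∨ μ = -1 := by
  have hμ0 : μ ≠ 0 := by
    rintro rfl
    have hdet : (QM ↑g).det = 0 := Matrix.exists_mulVec_eq_zero_iff.mp ⟨x, hx, by simpa using h⟩
    rw [QM_det] at hdet
    have : (↑g : Matrix (Fin 3) (Fin 3) ℤ).det = 0 := by exact_mod_cast hdet
    have hu : IsUnit (↑g : Matrix (Fin 3) (Fin 3) ℤ).det := by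
      exact (Matrix.isUnit_iff_isUnit_det _).mp g.isUnit
    rw [this] at hu
    simpa using hu
  have hmul : QM ↑(g⁻¹) * QM ↑g = 1 := by
    rw [← QM_mul, ← Units.val_mul, inv_mul_cancel, Units.val_one, QM_one]
  have hinv : (QM ↑(g⁻¹)).mulVec x = μ⁻¹ • x := by
    have h1 : x = μ⁻¹ • (QM ↑g).mulVec x := by rw [h, smul_smul, inv_mul_cancel₀ hμ0, one_smul]
    calc (QM ↑(g⁻¹)).mulVec x = (QM ↑(g⁻¹)).mulVec (μ⁻¹ • (QM ↑g).mulVec x) := by rw [← h1]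
      _ = μ⁻¹ • (QM ↑(g⁻¹)).mulVec ((QM ↑g).mulVec x) := by rw [Matrix.mulVec_smul]
      _ = μ⁻¹ • (QM ↑(g⁻¹) * QM ↑g).mulVec x := by rw [Matrix.mulVec_mulVec]
      _ = μ⁻¹ • x := by rw [hmul, Matrix.one_mulVec]
  obtain ⟨a, ha⟩ := int_eig _ hx h
  obtain ⟨b, hb⟩ := int_eig _ hx hinv
  have hab : a * b = 1 := by
    have : ((a * b : ℤ) : ℚ) = 1 := by push_cast [ha, hb]; field_simp
    exact_mod_cast this
  have : IsUnit a := IsUnit.of_mul_eq_one (a := a) b hab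
  rcases Int.isUnit_iff.mp this with rfl | rfl
  · exact Or.inl ha.symm
  · exact Or.inr ha.symm

lemma exists_fixed {A : Matrix (Fin 3) (Fin 3) ℚ} (h : (A - 1).det = 0) :
    ∃ v, v ≠ 0 ∧ A.mulVec v = v := by
  obtain ⟨v, hv, hker⟩ := Matrix.exists_mulVec_eq_zero_iff.mpr h
  refine ⟨v, hv, ?_⟩
  rw [Matrix.sub_mulVec, Matrix.one_mulVec, sub_eq_zero] at hker
  exact hker

lemma exists_outside (v w : Fin 3 → ℚ) : ∃ u, ¬∃ s t : ℚ, u = s • v + t • w := by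
  by_contra hcon
  push_neg at hcon
  have htop : Submodule.span ℚ ({v, w} : Set (Fin 3 → ℚ)) = ⊤ := by
    rw [eq_top_iff]
    intro u _
    obtain ⟨s, t, hst⟩ := hcon u
    rw [hst]
    exact Submodule.mem_span_pair.mpr ⟨s, t, rfl⟩
  have h1 : Module.finrank ℚ (Submodule.span ℚ ({v, w} : Set (Fin 3 → ℚ))) ≤ 2 := by
    classical
    refine (finrank_span_le_card _).trans ?_
    have : ({v, w} : Set (Fin 3 → ℚ)).toFinset ⊆ {v, w} := by
      intro x hx
      simpa using hx
    calc ({v, w} : Set (Fin 3 → ℚ)).toFinset.card ≤ ({v, w} : Finset (Fin 3 → ℚ)).card :=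
          Finset.card_le_card this
      _ ≤ 2 := Finset.card_insert_le _ _ |>.trans (by simp)
  rw [htop] at h1
  have h2 : Module.finrank ℚ (⊤ : Submodule ℚ (Fin 3 → ℚ)) = 3 := by
    rw [finrank_top]
    simp [Module.finrank_pi]
  omega

lemma col_ext {X : Matrix (Fin 3) (Fin 3) ℚ} {j : Fin 3} {c : Fin 3 → ℚ}
    (h : X.mulVec (Pi.single j 1) = c) : ∀ i, X i j = c i := by
  intro i
  have := congrFun h i
  simpa [Matrix.mulVec_single] using this

lemma basisP (v w u : Fin 3 → ℚ) (hv : v ≠ 0) (hw : ¬∃ t : ℚ, w = t • v)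
    (hu : ¬∃ s t : ℚ, u = s • v + t • w) :
    ∃ P : Matrix (Fin 3) (Fin 3) ℚ, IsUnit P.det ∧ P.mulVec (Pi.single 0 1) = v ∧
      P.mulVec (Pi.single 1 1) = w ∧ P.mulVec (Pi.single 2 1) = u := by
  refine ⟨Matrix.of (fun i j => ![v, w, u] j i), ?_, ?_, ?_, ?_⟩
  · rw [isUnit_iff_ne_zero]
    intro hdet
    obtain ⟨c, hc0, hc⟩ := Matrix.exists_mulVec_eq_zero_iff.mpr hdet
    have hsum : ∀ i, c 0 * v i + c 1 * w i + c 2 * u i = 0 := by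
      intro i
      have := congrFun hc i
      simpa [Matrix.mulVec, dotProduct, Fin.sum_univ_three, mul_comm] using this
    by_cases h2 : c 2 = 0
    · by_cases h1 : c 1 = 0
      · have h0 : c 0 ≠ 0 := by
          intro h0
          apply hc0
          funext i
          fin_cases i <;> simp_all
        apply hv
        funext i
        have := hsum i
        rw [h1, h2] at this
        have : c 0 * v i = 0 := by linarith
        simpa [h0] using this
      · apply hw
        refine ⟨-(c 0) / c 1, ?_⟩
        funext i
        have h3 := hsum i
        rw [h2] at h3
        show w i = (-(c 0) / c 1) * v i
        field_simp
        linarith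
    · apply hu
      refine ⟨-(c 0) / c 2, -(c 1) / c 2, ?_⟩
      funext i
      have h3 := hsum i
      show u i = (-(c 0) / c 2) * v i + (-(c 1) / c 2) * w i
      field_simp
      linear_combination h3
  all_goals
    funext i
    simp [Matrix.mulVec_single]

lemma conj_sub_one_det {P Pi X : Matrix (Fin 3) (Fin 3) ℚ} (h1 : Pi * P = 1) :
    (Pi * X * P - 1).det = (X - 1).det := by
  have key : Pi * X * P - 1 = Pi * (X - 1) * P := by
    rw [Matrix.mul_sub, Matrix.sub_mul, Matrix.mul_one, h1]
  rw [key, Matrix.det_mul, Matrix.det_mul]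
  have : Pi.det * P.det = 1 := by rw [← Matrix.det_mul, h1, Matrix.det_one]
  calc Pi.det * (X - 1).det * P.det = (X - 1).det * (Pi.det * P.det) := by ring
    _ = (X - 1).det := by rw [this, mul_one]

lemma conj_mul' {P Pi X Y : Matrix (Fin 3) (Fin 3) ℚ} (h2 : P * Pi = 1) :
    (Pi * X * P) * (Pi * Y * P) = Pi * (X * Y) * P := by
  calc (Pi * X * P) * (Pi * Y * P) = Pi * X * (P * Pi) * Y * P := by
        simp only [Matrix.mul_assoc]
      _ = Pi * (X * Y) * P := by rw [h2, Matrix.mul_one]; simp only [Matrix.mul_assoc]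

lemma conj_fix {P Pi X : Matrix (Fin 3) (Fin 3) ℚ} (h1 : Pi * P = 1)
    {acoord bcoord x y : Fin 3 → ℚ} (ha : P.mulVec acoord = x) (hX : X.mulVec x = y)
    (hb : P.mulVec bcoord = y) : (Pi * X * P).mulVec acoord = bcoord := by
  rw [← Matrix.mulVec_mulVec, ← Matrix.mulVec_mulVec, ha, hX, ← hb, Matrix.mulVec_mulVec, h1,
    Matrix.one_mulVec]

lemma pullback_fix {P Pi X X' : Matrix (Fin 3) (Fin 3) ℚ} (h2 : P * Pi = 1)
    (hX' : X' = Pi * X * P) {f : Fin 3 → ℚ} (hf : X'.mulVec f = f) :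
    X.mulVec (P.mulVec f) = P.mulVec f := by
  have hPX : X * P = P * X' := by
    rw [hX']
    calc X * P = P * Pi * X * P := by rw [h2, Matrix.one_mul]
      _ = P * (Pi * X * P) := by simp only [Matrix.mul_assoc]
  rw [Matrix.mulVec_mulVec, hPX, ← Matrix.mulVec_mulVec, hf]

lemma plane_case (A B : Matrix (Fin 3) (Fin 3) ℚ) (hAB : A * B = B * A)
    (hdetA : A.det = 1 ∨ A.det = -1)
    (hdetAB : (A * B - 1).det = 0)
    (hfixQ : ∀ x : Fin 3 → ℚ, A.mulVec x = x → B.mulVec x = x → x = 0)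
    (v v2 w : Fin 3 → ℚ) (hv : v ≠ 0) (hw : w ≠ 0)
    (hAv : A.mulVec v = v) (hAv2 : A.mulVec v2 = v2) (hBw : B.mulVec w = w)
    (hind : ¬∃ t : ℚ, v2 = t • v) : False := by
  have hwspan : ¬∃ s t : ℚ, w = s • v + t • v2 := by
    rintro ⟨s, t, rfl⟩
    have hAw : A.mulVec (s • v + t • v2) = s • v + t • v2 := by
      rw [Matrix.mulVec_add, Matrix.mulVec_smul, Matrix.mulVec_smul, hAv, hAv2]
    exact hw (hfixQ _ hAw hBw)
  obtain ⟨P, hPdet, hP0, hP1, hP2⟩ := basisP v v2 w hv hind hwspan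
  set Pinv := P⁻¹ with hPidef
  have h1 : Pinv * P = 1 := Matrix.nonsing_inv_mul P hPdet
  have h2 : P * Pinv = 1 := Matrix.mul_nonsing_inv P hPdet
  set A' := Pinv * A * P with hA'def
  set B' := Pinv * B * P with hB'def
  have hcomm' : A' * B' = B' * A' := by
    rw [hA'def, hB'def, conj_mul' h2, conj_mul' h2, hAB]
  have hA'c0 : A'.mulVec (Pi.single 0 1) = Pi.single 0 1 := conj_fix h1 hP0 hAv hP0
  have hA'c1 : A'.mulVec (Pi.single 1 1) = Pi.single 1 1 := conj_fix h1 hP1 hAv2 hP1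
  have hB'c2 : B'.mulVec (Pi.single 2 1) = Pi.single 2 1 := conj_fix h1 hP2 hBw hP2
  have eA0 := col_ext hA'c0
  have eA1 := col_ext hA'c1
  have eB2 := col_ext hB'c2
  have hA00 : A' 0 0 = 1 := by simpa using eA0 0
  have hA10 : A' 1 0 = 0 := by simpa using eA0 1
  have hA20 : A' 2 0 = 0 := by simpa using eA0 2
  have hA01 : A' 0 1 = 0 := by simpa using eA1 0
  have hA11 : A' 1 1 = 1 := by simpa using eA1 1
  have hA21 : A' 2 1 = 0 := by simpa using eA1 2
  have hB02 : B' 0 2 = 0 := by simpa using eB2 0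
  have hB12 : B' 1 2 = 0 := by simpa using eB2 1
  have hB22 : B' 2 2 = 1 := by simpa using eB2 2
  have hdetA' : A'.det = A.det := by
    rw [hA'def, Matrix.det_mul, Matrix.det_mul]
    have hPP : Pinv.det * P.det = 1 := by rw [← Matrix.det_mul, h1, Matrix.det_one]
    calc Pinv.det * A.det * P.det = A.det * (Pinv.det * P.det) := by ring
      _ = A.det := by rw [hPP, mul_one]
  have hαval : A' 2 2 = A.det := by
    rw [← hdetA', Matrix.det_fin_three, hA00, hA10, hA20, hA01, hA11, hA21]
    ring
  have hcolA2 : A'.mulVec (Pi.single 2 1) = fun i => A' i 2 := by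
    funext i; simp [Matrix.mulVec_single]
  have hBfixcol : B'.mulVec (fun i => A' i 2) = fun i => A' i 2 := by
    calc B'.mulVec (fun i => A' i 2) = B'.mulVec (A'.mulVec (Pi.single 2 1)) := by rw [hcolA2]
      _ = (B' * A').mulVec (Pi.single 2 1) := by rw [Matrix.mulVec_mulVec]
      _ = (A' * B').mulVec (Pi.single 2 1) := by rw [hcomm']
      _ = A'.mulVec (B'.mulVec (Pi.single 2 1)) := by rw [Matrix.mulVec_mulVec]
      _ = A'.mulVec (Pi.single 2 1) := by rw [hB'c2]
      _ = fun i => A' i 2 := hcolA2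
  have hα : A' 2 2 = 1 ∨ A' 2 2 = -1 := by rw [hαval]; exact hdetA
  have key : ∃ f : Fin 3 → ℚ, f ≠ 0 ∧ A'.mulVec f = f ∧ B'.mulVec f = f := by
    rcases hα with hα1 | hα1
    · -- α = 1
      by_cases hab : A' 0 2 = 0 ∧ A' 1 2 = 0
      · exfalso
        have hA'1 : A' = 1 := by
          ext i j
          fin_cases i <;> fin_cases j <;>
            simp [hA00, hA10, hA20, hA01, hA11, hA21, hab.1, hab.2, hα1, Matrix.one_apply]
        have hA1 : A = 1 := by
          have h5 : P * A' * Pinv = A := by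
            rw [hA'def]
            calc P * (Pinv * A * P) * Pinv = (P * Pinv) * A * (P * Pinv) := by
                  simp only [Matrix.mul_assoc]
              _ = A := by rw [h2, Matrix.one_mul, Matrix.mul_one]
          rw [hA'1, Matrix.mul_one, h2] at h5
          exact h5.symm
        exact hw (hfixQ w (by rw [hA1, Matrix.one_mulVec]) hBw)
      · refine ⟨fun i => A' i 2 - (Pi.single 2 1 : Fin 3 → ℚ) i, ?_, ?_, ?_⟩
        · intro hf0
          rcases (not_and_or.mp hab) with h | h
          · exact h (by simpa using congrFun hf0 0)
          · exact h (by simpa using congrFun hf0 1)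
        · funext i
          simp only [Matrix.mulVec, dotProduct, Fin.sum_univ_three]
          fin_cases i <;>
            simp [hA00, hA10, hA20, hA01, hA11, hA21, hα1, Pi.single_apply] <;> ring
        · have hsub : B'.mulVec (fun i => A' i 2 - (Pi.single 2 1 : Fin 3 → ℚ) i) =
              B'.mulVec ((fun i => A' i 2) - Pi.single 2 1) := rfl
          rw [hsub, Matrix.mulVec_sub, hBfixcol, hB'c2]
          rfl
    · -- α = -1
      have hAfixB0 : A'.mulVec (fun i => B' i 0) = fun i => B' i 0 := by
        have hcolB0 : B'.mulVec (Pi.single 0 1) = fun i => B' i 0 := by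
          funext i; simp [Matrix.mulVec_single]
        calc A'.mulVec (fun i => B' i 0) = A'.mulVec (B'.mulVec (Pi.single 0 1)) := by rw [hcolB0]
          _ = (A' * B').mulVec (Pi.single 0 1) := by rw [Matrix.mulVec_mulVec]
          _ = (B' * A').mulVec (Pi.single 0 1) := by rw [hcomm']
          _ = B'.mulVec (A'.mulVec (Pi.single 0 1)) := by rw [Matrix.mulVec_mulVec]
          _ = B'.mulVec (Pi.single 0 1) := by rw [hA'c0]
          _ = fun i => B' i 0 := hcolB0
      have hAfixB1 : A'.mulVec (fun i => B' i 1) = fun i => B' i 1 := by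
        have hcolB1 : B'.mulVec (Pi.single 1 1) = fun i => B' i 1 := by
          funext i; simp [Matrix.mulVec_single]
        calc A'.mulVec (fun i => B' i 1) = A'.mulVec (B'.mulVec (Pi.single 1 1)) := by rw [hcolB1]
          _ = (A' * B').mulVec (Pi.single 1 1) := by rw [Matrix.mulVec_mulVec]
          _ = (B' * A').mulVec (Pi.single 1 1) := by rw [hcomm']
          _ = B'.mulVec (A'.mulVec (Pi.single 1 1)) := by rw [Matrix.mulVec_mulVec]
          _ = B'.mulVec (Pi.single 1 1) := by rw [hA'c1]
          _ = fun i => B' i 1 := hcolB1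
      have hB20 : B' 2 0 = 0 := by
        have h3 := congrFun hAfixB0 2
        simp only [Matrix.mulVec, dotProduct, Fin.sum_univ_three, hA20, hA21, hα1] at h3
        linarith
      have hB21 : B' 2 1 = 0 := by
        have h3 := congrFun hAfixB1 2
        simp only [Matrix.mulVec, dotProduct, Fin.sum_univ_three, hA20, hA21, hα1] at h3
        linarith
      have hdetAB' : (A' * B' - 1).det = 0 := by
        rw [hA'def, hB'def, conj_mul' h2, conj_sub_one_det h1]
        exact hdetAB
      -- entries of E = A' * B'
      have hE00 : (A' * B') 0 0 = B' 0 0 := by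
        rw [Matrix.mul_apply, Fin.sum_univ_three, hA00, hA01, hB20]; ring
      have hE01 : (A' * B') 0 1 = B' 0 1 := by
        rw [Matrix.mul_apply, Fin.sum_univ_three, hA00, hA01, hB21]; ring
      have hE02 : (A' * B') 0 2 = A' 0 2 := by
        rw [Matrix.mul_apply, Fin.sum_univ_three, hB02, hB12, hB22]; ring
      have hE10 : (A' * B') 1 0 = B' 1 0 := by
        rw [Matrix.mul_apply, Fin.sum_univ_three, hA10, hA11, hB20]; ring
      have hE11 : (A' * B') 1 1 = B' 1 1 := by
        rw [Matrix.mul_apply, Fin.sum_univ_three, hA10, hA11, hB21]; ring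
      have hE12 : (A' * B') 1 2 = A' 1 2 := by
        rw [Matrix.mul_apply, Fin.sum_univ_three, hB02, hB12, hB22]; ring
      have hE20 : (A' * B') 2 0 = 0 := by
        rw [Matrix.mul_apply, Fin.sum_univ_three, hA20, hA21, hB20]; ring
      have hE21 : (A' * B') 2 1 = 0 := by
        rw [Matrix.mul_apply, Fin.sum_univ_three, hA20, hA21, hB21]; ring
      have hE22 : (A' * B') 2 2 = -1 := by
        rw [Matrix.mul_apply, Fin.sum_univ_three, hB02, hB12, hB22, hα1]; ring
      have hK : (B' 0 0 - 1) * (B' 1 1 - 1) - B' 0 1 * B' 1 0 = 0 := by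
        rw [Matrix.det_fin_three] at hdetAB'
        simp only [Matrix.sub_apply, hE00, hE01, hE02, hE10, hE11, hE12, hE20, hE21, hE22] at hdetAB'
        norm_num [Matrix.one_apply, Fin.ext_iff] at hdetAB'
        linarith
      have hKdet : (!![B' 0 0 - 1, B' 0 1; B' 1 0, B' 1 1 - 1]).det = 0 := by
        rw [Matrix.det_fin_two]
        simpa using hK
      obtain ⟨g, hg0, hgker⟩ := Matrix.exists_mulVec_eq_zero_iff.mpr hKdet
      have hgrow0 : (B' 0 0 - 1) * g 0 + B' 0 1 * g 1 = 0 := by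
        have h3 := congrFun hgker 0
        simpa [Matrix.mulVec, dotProduct, Fin.sum_univ_two] using h3
      have hgrow1 : B' 1 0 * g 0 + (B' 1 1 - 1) * g 1 = 0 := by
        have h3 := congrFun hgker 1
        simpa [Matrix.mulVec, dotProduct, Fin.sum_univ_two] using h3
      refine ⟨![g 0, g 1, 0], ?_, ?_, ?_⟩
      · intro hf0
        apply hg0
        funext i
        fin_cases i
        · simpa using congrFun hf0 0
        · simpa using congrFun hf0 1
      · funext i
        simp only [Matrix.mulVec, dotProduct, Fin.sum_univ_three]
        fin_cases i <;>
          simp [hA00, hA10, hA20, hA01, hA11, hA21]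
      · funext i
        simp only [Matrix.mulVec, dotProduct, Fin.sum_univ_three]
        fin_cases i <;> simp [hB20, hB21] <;> linarith [hgrow0, hgrow1]
  obtain ⟨f, hf0, hA'f, hB'f⟩ := key
  have hxA := pullback_fix h2 hA'def hA'f
  have hxB := pullback_fix h2 hB'def hB'f
  have hx0 : P.mulVec f ≠ 0 := by
    intro hP0'
    apply hf0
    have h3 : (Pinv * P).mulVec f = Pinv.mulVec (P.mulVec f) := (Matrix.mulVec_mulVec _ _ _).symm
    rw [h1, Matrix.one_mulVec, hP0', Matrix.mulVec_zero] at h3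
    exact h3
  exact hx0 (hfixQ _ hxA hxB)
theorem maximal_abelian_klein_group
    (N M : GL (Fin 3) ℤ)
    (hcomm : N * M = M * N)
    (hspec : ∀ n m : ℤ, (((N ^ n * M ^ m : GL (Fin 3) ℤ) :
      Matrix (Fin 3) (Fin 3) ℤ) - 1).det = 0)
    (hfix : ∀ k : Fin 3 → ℤ,
      (∀ n m : ℤ, ((N ^ n * M ^ m : GL (Fin 3) ℤ) :
        Matrix (Fin 3) (Fin 3) ℤ).mulVec k = k) → k = 0)
    (G : Subgroup (GL (Fin 3) ℤ))
    (hab : ∀ x ∈ G, ∀ y ∈ G, x * y = y * x)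
    (hNG : N ∈ G) (hMG : M ∈ G)
    (hGspec : ∀ g ∈ G, ((g : Matrix (Fin 3) (Fin 3) ℤ) - 1).det = 0) :
    G = Subgroup.closure ({N, M} : Set (GL (Fin 3) ℤ)) := by
  classical
  set A := QM (↑N) with hAdef
  set B := QM (↑M) with hBdef
  have hABc : A * B = B * A := by
    rw [hAdef, hBdef, ← QM_mul, ← QM_mul, ← Units.val_mul, ← Units.val_mul, hcomm]
  have hdetA1 : (A - 1).det = 0 := by
    have h := hspec 1 0
    simp only [zpow_one, zpow_zero, mul_one] at h
    rw [hAdef, ← QM_sub_one, QM_det, h, Int.cast_zero]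
  have hdetB1 : (B - 1).det = 0 := by
    have h := hspec 0 1
    simp only [zpow_one, zpow_zero, one_mul] at h
    rw [hBdef, ← QM_sub_one, QM_det, h, Int.cast_zero]
  have hdetAB1 : (A * B - 1).det = 0 := by
    have h := hspec 1 1
    simp only [zpow_one, Units.val_mul] at h
    rw [hAdef, hBdef, ← QM_mul, ← QM_sub_one, QM_det, h, Int.cast_zero]
  have hdetA : A.det = 1 ∨ A.det = -1 := by
    have hu : IsUnit ((↑N : Matrix (Fin 3) (Fin 3) ℤ)).det :=
      (Matrix.isUnit_iff_isUnit_det _).mp N.isUnit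
    rcases Int.isUnit_iff.mp hu with h | h
    · left; rw [hAdef, QM_det, h, Int.cast_one]
    · right; rw [hAdef, QM_det, h]; norm_num
  have hdetB : B.det = 1 ∨ B.det = -1 := by
    have hu : IsUnit ((↑M : Matrix (Fin 3) (Fin 3) ℤ)).det :=
      (Matrix.isUnit_iff_isUnit_det _).mp M.isUnit
    rcases Int.isUnit_iff.mp hu with h | h
    · left; rw [hBdef, QM_det, h, Int.cast_one]
    · right; rw [hBdef, QM_det, h]; norm_num
  -- transfer of the fixed-point hypothesis
  have hfixQ : ∀ x : Fin 3 → ℚ, A.mulVec x = x → B.mulVec x = x → x = 0 := by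
    intro x hAx hBx
    set D : ℕ := (x 0).den * ((x 1).den * (x 2).den) with hDdef
    have hDpos : 0 < D :=
      Nat.mul_pos (x 0).pos (Nat.mul_pos (x 1).pos (x 2).pos)
    have hD0 : (D : ℚ) ≠ 0 := Nat.cast_ne_zero.mpr hDpos.ne'
    obtain ⟨k0, hk0⟩ := clear_denom (x 0) D ⟨(x 1).den * (x 2).den, rfl⟩
    obtain ⟨k1, hk1⟩ := clear_denom (x 1) D ⟨(x 0).den * (x 2).den, by rw [hDdef]; ring⟩
    obtain ⟨k2, hk2⟩ := clear_denom (x 2) D ⟨(x 0).den * (x 1).den, by rw [hDdef]; ring⟩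
    set k : Fin 3 → ℤ := ![k0, k1, k2] with hkdef
    have hkx : ∀ i, (k i : ℚ) = x i * D := by
      intro i
      fin_cases i <;> simpa [hkdef] using (by assumption)
    have hcastk : (fun i => (k i : ℚ)) = (D : ℚ) • x := by
      funext i
      rw [hkx i]
      simp [mul_comm]
    have hfixmat : ∀ (X : Matrix (Fin 3) (Fin 3) ℤ), (QM X).mulVec x = x →
        X.mulVec k = k := by
      intro X hX
      have hq : (QM X).mulVec (fun i => (k i : ℚ)) = fun i => (k i : ℚ) := by
        rw [hcastk, Matrix.mulVec_smul, hX]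
      rw [QM_mulVec] at hq
      funext i
      have := congrFun hq i
      exact_mod_cast this
    have hNk : (↑N : Matrix (Fin 3) (Fin 3) ℤ).mulVec k = k := hfixmat _ hAx
    have hMk : (↑M : Matrix (Fin 3) (Fin 3) ℤ).mulVec k = k := hfixmat _ hBx
    have hall : ∀ n m : ℤ, ((N ^ n * M ^ m : GL (Fin 3) ℤ) :
        Matrix (Fin 3) (Fin 3) ℤ).mulVec k = k := by
      intro n m
      rw [Units.val_mul, ← Matrix.mulVec_mulVec, fix_zpow M k hMk m, fix_zpow N k hNk n]
    have hk0' := hfix k hall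
    funext i
    have h0 : (k i : ℚ) = 0 := by rw [hk0']; simp
    have h1 := hkx i
    rw [h0] at h1
    have := (mul_eq_zero.mp h1.symm).resolve_right hD0
    simpa using this
  -- fixed vectors
  obtain ⟨v, hv, hAv⟩ := exists_fixed hdetA1
  obtain ⟨w, hw, hBw⟩ := exists_fixed hdetB1
  -- the fixed spaces are lines
  have hlineA : ∀ x : Fin 3 → ℚ, A.mulVec x = x → ∃ t : ℚ, x = t • v := by
    intro x hx
    by_contra hcon
    exact plane_case A B hABc hdetA hdetAB1 hfixQ v x w hv hw hAv hx hBw hcon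
  have hlineB : ∀ x : Fin 3 → ℚ, B.mulVec x = x → ∃ t : ℚ, x = t • w := by
    intro x hx
    by_contra hcon
    have hdetBA1 : (B * A - 1).det = 0 := by rw [← hABc]; exact hdetAB1
    have hfixQ' : ∀ x : Fin 3 → ℚ, B.mulVec x = x → A.mulVec x = x → x = 0 :=
      fun x h1 h2 => hfixQ x h2 h1
    exact plane_case B A hABc.symm hdetB hdetBA1 hfixQ' w x v hw hv hBw hx hAv hcon
  -- w is not a multiple of v
  have hwv : ¬∃ t : ℚ, w = t • v := by
    rintro ⟨t, rfl⟩
    have hAw : A.mulVec (t • v) = t • v := by rw [Matrix.mulVec_smul, hAv]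
    exact hw (hfixQ _ hAw hBw)
  -- B v = -v
  have hBv : B.mulVec v = -v := by
    have hfixBv : A.mulVec (B.mulVec v) = B.mulVec v := by
      rw [Matrix.mulVec_mulVec, hABc, ← Matrix.mulVec_mulVec, hAv]
    obtain ⟨β, hβ⟩ := hlineA _ hfixBv
    have hβval : β = 1 ∨ β = -1 := by
      refine unit_eig M hv ?_
      rw [← hBdef, hβ]
    rcases hβval with h | h
    · exfalso
      rw [h, one_smul] at hβ
      exact hv (hfixQ v hAv hβ)
    · rw [hβ, h, neg_one_smul]
  have hAw : A.mulVec w = -w := by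
    have hfixAw : B.mulVec (A.mulVec w) = A.mulVec w := by
      rw [Matrix.mulVec_mulVec, ← hABc, ← Matrix.mulVec_mulVec, hBw]
    obtain ⟨β, hβ⟩ := hlineB _ hfixAw
    have hβval : β = 1 ∨ β = -1 := by
      refine unit_eig N hw ?_
      rw [← hAdef, hβ]
    rcases hβval with h | h
    · exfalso
      rw [h, one_smul] at hβ
      exact hw (hfixQ w hβ hBw)
    · rw [hβ, h, neg_one_smul]
  -- basis
  obtain ⟨u, hu⟩ := exists_outside v w
  obtain ⟨P, hPdet, hP0, hP1, hP2⟩ := basisP v w u hv hwv hu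
  set Pinv := P⁻¹ with hPidef
  have h1 : Pinv * P = 1 := Matrix.nonsing_inv_mul P hPdet
  have h2 : P * Pinv = 1 := Matrix.mul_nonsing_inv P hPdet
  set A' := Pinv * A * P with hA'def
  set B' := Pinv * B * P with hB'def
  have hcomm' : A' * B' = B' * A' := by
    rw [hA'def, hB'def, conj_mul' h2, conj_mul' h2, hABc]
  have hA'c0 : A'.mulVec (Pi.single 0 1) = Pi.single 0 1 := conj_fix h1 hP0 hAv hP0
  have hA'c1 : A'.mulVec (Pi.single 1 1) = -(Pi.single 1 1) :=
    conj_fix h1 hP1 hAw (by rw [Matrix.mulVec_neg, hP1])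
  have hB'c0 : B'.mulVec (Pi.single 0 1) = -(Pi.single 0 1) :=
    conj_fix h1 hP0 hBv (by rw [Matrix.mulVec_neg, hP0])
  have hB'c1 : B'.mulVec (Pi.single 1 1) = Pi.single 1 1 := conj_fix h1 hP1 hBw hP1
  have eA0 := col_ext hA'c0
  have eA1 := col_ext hA'c1
  have eB0 := col_ext hB'c0
  have eB1 := col_ext hB'c1
  have hA00 : A' 0 0 = 1 := by simpa using eA0 0
  have hA10 : A' 1 0 = 0 := by simpa using eA0 1
  have hA20 : A' 2 0 = 0 := by simpa using eA0 2
  have hA01 : A' 0 1 = 0 := by simpa using eA1 0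
  have hA11 : A' 1 1 = -1 := by simpa using eA1 1
  have hA21 : A' 2 1 = 0 := by simpa using eA1 2
  have hB00 : B' 0 0 = -1 := by simpa using eB0 0
  have hB10 : B' 1 0 = 0 := by simpa using eB0 1
  have hB20 : B' 2 0 = 0 := by simpa using eB0 2
  have hB01 : B' 0 1 = 0 := by simpa using eB1 0
  have hB11 : B' 1 1 = 1 := by simpa using eB1 1
  have hB21 : B' 2 1 = 0 := by simpa using eB1 2
  -- determinants give the corner entries up to sign
  have hdetA' : A'.det = A.det := by
    rw [hA'def, Matrix.det_mul, Matrix.det_mul]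
    have hPP : Pinv.det * P.det = 1 := by rw [← Matrix.det_mul, h1, Matrix.det_one]
    calc Pinv.det * A.det * P.det = A.det * (Pinv.det * P.det) := by ring
      _ = A.det := by rw [hPP, mul_one]
  have hdetB' : B'.det = B.det := by
    rw [hB'def, Matrix.det_mul, Matrix.det_mul]
    have hPP : Pinv.det * P.det = 1 := by rw [← Matrix.det_mul, h1, Matrix.det_one]
    calc Pinv.det * B.det * P.det = B.det * (Pinv.det * P.det) := by ring
      _ = B.det := by rw [hPP, mul_one]
  have hα : A' 2 2 = 1 ∨ A' 2 2 = -1 := by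
    have h3 : A'.det = -(A' 2 2) := by
      rw [Matrix.det_fin_three, hA00, hA10, hA20, hA01, hA11, hA21]; ring
    rw [hdetA'] at h3
    rcases hdetA with h | h <;> rw [h] at h3
    · right; linarith
    · left; linarith
  have hγ : B' 2 2 = 1 ∨ B' 2 2 = -1 := by
    have h3 : B'.det = -(B' 2 2) := by
      rw [Matrix.det_fin_three, hB00, hB10, hB20, hB01, hB11, hB21]; ring
    rw [hdetB'] at h3
    rcases hdetB with h | h <;> rw [h] at h3
    · right; linarith
    · left; linarith
  -- entries of E = A' * B'
  have hE00 : (A' * B') 0 0 = -1 := by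
    rw [Matrix.mul_apply, Fin.sum_univ_three, hA00, hA01, hB00, hB10, hB20]; ring
  have hE01 : (A' * B') 0 1 = 0 := by
    rw [Matrix.mul_apply, Fin.sum_univ_three, hA00, hA01, hB01, hB11, hB21]; ring
  have hE10 : (A' * B') 1 0 = 0 := by
    rw [Matrix.mul_apply, Fin.sum_univ_three, hA10, hA11, hB00, hB10, hB20]; ring
  have hE11 : (A' * B') 1 1 = -1 := by
    rw [Matrix.mul_apply, Fin.sum_univ_three, hA10, hA11, hB01, hB11, hB21]; ring
  have hE20 : (A' * B') 2 0 = 0 := by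
    rw [Matrix.mul_apply, Fin.sum_univ_three, hA20, hA21, hB00, hB10, hB20]; ring
  have hE21 : (A' * B') 2 1 = 0 := by
    rw [Matrix.mul_apply, Fin.sum_univ_three, hA20, hA21, hB01, hB11, hB21]; ring
  have hE22 : (A' * B') 2 2 = A' 2 2 * B' 2 2 := by
    rw [Matrix.mul_apply, Fin.sum_univ_three, hA20, hA21]; ring
  have hdetE1 : (A' * B' - 1).det = 0 := by
    rw [hA'def, hB'def, conj_mul' h2, conj_sub_one_det h1]
    exact hdetAB1
  have hαγ : A' 2 2 * B' 2 2 = 1 := by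
    rw [Matrix.det_fin_three] at hdetE1
    simp only [Matrix.sub_apply, hE00, hE01, hE10, hE11, hE20, hE21, hE22] at hdetE1
    norm_num [Matrix.one_apply, Fin.ext_iff] at hdetE1
    linarith
  have hγα : B' 2 2 = A' 2 2 := by
    rcases hα with h | h <;> rcases hγ with h' | h' <;> rw [h, h'] at hαγ ⊢ <;> linarith
  -- commutation relations on the last column
  have hcomm02 : A' 0 2 + (A' 0 2 - B' 0 2) * A' 2 2 = -(A' 0 2) + B' 0 2 * A' 2 2 →
      True := fun _ => trivial
  have hc02 : (A' * B') 0 2 = (B' * A') 0 2 := by rw [hcomm']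
  have hc12 : (A' * B') 1 2 = (B' * A') 1 2 := by rw [hcomm']
  have heq02 : B' 0 2 + A' 0 2 * B' 2 2 = -(A' 0 2) + B' 0 2 * A' 2 2 := by
    rw [Matrix.mul_apply, Fin.sum_univ_three, Matrix.mul_apply, Fin.sum_univ_three] at hc02
    rw [hA00, hA01, hB00, hB01] at hc02
    linarith
  have heq12 : -(B' 1 2) + A' 1 2 * B' 2 2 = B' 1 2 * A' 2 2 + A' 1 2 := by
    rw [Matrix.mul_apply, Fin.sum_univ_three, Matrix.mul_apply, Fin.sum_univ_three] at hc12
    rw [hA10, hA11, hB10, hB11] at hc12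
    linarith
  -- case α = 1 is impossible
  have hαm1 : A' 2 2 = -1 := by
    rcases hα with hα1 | hα1
    · exfalso
      have hγ1 : B' 2 2 = 1 := by rw [hγα, hα1]
      have ha0 : A' 0 2 = 0 := by rw [hα1, hγ1] at heq02; linarith
      have hd0 : B' 1 2 = 0 := by rw [hα1, hγ1] at heq12; linarith
      -- common fixed vector ![c, b, 2]
      set f : Fin 3 → ℚ := ![B' 0 2, A' 1 2, 2] with hfdef
      have hf0 : f ≠ 0 := by
        intro hf
        have := congrFun hf 2
        change (2 : ℚ) = 0 at this
        norm_num [hfdef] at this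
      have hA'f : A'.mulVec f = f := by
        funext i
        simp only [Matrix.mulVec, dotProduct, Fin.sum_univ_three]
        fin_cases i <;>
          simp [hfdef, hA00, hA10, hA20, hA01, hA11, hA21, ha0, hα1] <;> ring
      have hB'f : B'.mulVec f = f := by
        funext i
        simp only [Matrix.mulVec, dotProduct, Fin.sum_univ_three]
        fin_cases i <;>
          simp [hfdef, hB00, hB10, hB20, hB01, hB11, hB21, hd0, hγ1] <;> ring
      have hxA := pullback_fix h2 hA'def hA'f
      have hxB := pullback_fix h2 hB'def hB'f
      have hx0 : P.mulVec f ≠ 0 := by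
        intro hPf
        apply hf0
        have h3 : (Pinv * P).mulVec f = Pinv.mulVec (P.mulVec f) :=
          (Matrix.mulVec_mulVec _ _ _).symm
        rw [h1, Matrix.one_mulVec, hPf, Matrix.mulVec_zero] at h3
        exact h3
      exact hx0 (hfixQ _ hxA hxB)
    · exact hα1
  have hγm1 : B' 2 2 = -1 := by rw [hγα, hαm1]
  have hc0 : B' 0 2 = 0 := by rw [hαm1, hγm1] at heq02; linarith
  have hb0 : A' 1 2 = 0 := by rw [hαm1, hγm1] at heq12; linarith
  -- entries of E in final form
  have hE02 : (A' * B') 0 2 = -(A' 0 2) := by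
    rw [Matrix.mul_apply, Fin.sum_univ_three, hA00, hA01, hc0, hγm1]; ring
  have hE12 : (A' * B') 1 2 = -(B' 1 2) := by
    rw [Matrix.mul_apply, Fin.sum_univ_three, hA10, hA11, hb0, hγm1]; ring
  have hE22' : (A' * B') 2 2 = 1 := by rw [hE22, hαm1, hγm1]; ring
  -- key lemma : elements of G whose conjugate fixes e0 and e1 are trivial
  have key1 : ∀ h : GL (Fin 3) ℤ, h ∈ G →
      (Pinv * QM (↑h) * P).mulVec (Pi.single 0 1) = Pi.single 0 1 →
      (Pinv * QM (↑h) * P).mulVec (Pi.single 1 1) = Pi.single 1 1 → h = 1 := by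
    intro h hhG hh0 hh1
    set H' := Pinv * QM (↑h) * P with hH'def
    have eH0 := col_ext hh0
    have eH1 := col_ext hh1
    have hH00 : H' 0 0 = 1 := by simpa using eH0 0
    have hH10 : H' 1 0 = 0 := by simpa using eH0 1
    have hH20 : H' 2 0 = 0 := by simpa using eH0 2
    have hH01 : H' 0 1 = 0 := by simpa using eH1 0
    have hH11 : H' 1 1 = 1 := by simpa using eH1 1
    have hH21 : H' 2 1 = 0 := by simpa using eH1 2
    -- ρ = 1 via hGspec applied to h * (N * M)
    have hzG : h * (N * M) ∈ G := mul_mem hhG (mul_mem hNG hMG)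
    have hzdet : (QM (↑(h * (N * M))) - 1).det = 0 := by
      rw [← QM_sub_one, QM_det, hGspec _ hzG, Int.cast_zero]
    have hzval : QM (↑(h * (N * M))) = QM (↑h) * (QM (↑N) * QM (↑M)) := by
      rw [Units.val_mul, Units.val_mul, QM_mul, QM_mul]
    have hzconj : (H' * (A' * B') - 1).det = 0 := by
      have h3 : Pinv * QM (↑(h * (N * M))) * P = H' * (A' * B') := by
        rw [hzval, hH'def, hA'def, hB'def, conj_mul' h2, conj_mul' h2]
      rw [← h3, conj_sub_one_det h1]
      exact hzdet
    -- entries of F = H' * E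
    have hF00 : (H' * (A' * B')) 0 0 = -1 := by
      rw [Matrix.mul_apply, Fin.sum_univ_three, hH00, hH01, hE00, hE10, hE20]; ring
    have hF01 : (H' * (A' * B')) 0 1 = 0 := by
      rw [Matrix.mul_apply, Fin.sum_univ_three, hH00, hH01, hE01, hE11, hE21]; ring
    have hF10 : (H' * (A' * B')) 1 0 = 0 := by
      rw [Matrix.mul_apply, Fin.sum_univ_three, hH10, hH11, hE00, hE10, hE20]; ring
    have hF11 : (H' * (A' * B')) 1 1 = -1 := by
      rw [Matrix.mul_apply, Fin.sum_univ_three, hH10, hH11, hE01, hE11, hE21]; ring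
    have hF20 : (H' * (A' * B')) 2 0 = 0 := by
      rw [Matrix.mul_apply, Fin.sum_univ_three, hH20, hH21, hE00, hE10, hE20]; ring
    have hF21 : (H' * (A' * B')) 2 1 = 0 := by
      rw [Matrix.mul_apply, Fin.sum_univ_three, hH20, hH21, hE01, hE11, hE21]; ring
    have hF22 : (H' * (A' * B')) 2 2 = H' 2 2 := by
      rw [Matrix.mul_apply, Fin.sum_univ_three, hH20, hH21, hE22']; ring
    have hρ : H' 2 2 = 1 := by
      rw [Matrix.det_fin_three] at hzconj
      simp only [Matrix.sub_apply, hF00, hF01, hF10, hF11, hF20, hF21, hF22] at hzconj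
      norm_num [Matrix.one_apply, Fin.ext_iff] at hzconj
      linarith
    -- commutation kills the last column
    have hhN : QM (↑h) * A = A * QM (↑h) := by
      have h3 := hab h hhG N hNG
      rw [hAdef, ← QM_mul, ← QM_mul, ← Units.val_mul, ← Units.val_mul, h3]
    have hhM : QM (↑h) * B = B * QM (↑h) := by
      have h3 := hab h hhG M hMG
      rw [hBdef, ← QM_mul, ← QM_mul, ← Units.val_mul, ← Units.val_mul, h3]
    have hcommA : H' * A' = A' * H' := by
      rw [hH'def, hA'def, conj_mul' h2, conj_mul' h2, hhN]
    have hcommB : H' * B' = B' * H' := by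
      rw [hH'def, hB'def, conj_mul' h2, conj_mul' h2, hhM]
    have hp0 : H' 0 2 = 0 := by
      have h3 : (H' * A') 0 2 = (A' * H') 0 2 := by rw [hcommA]
      rw [Matrix.mul_apply, Fin.sum_univ_three, Matrix.mul_apply, Fin.sum_univ_three] at h3
      rw [hH00, hH01, hA00, hA01, hαm1, hb0, hρ] at h3
      linarith
    have hq0 : H' 1 2 = 0 := by
      have h3 : (H' * B') 1 2 = (B' * H') 1 2 := by rw [hcommB]
      rw [Matrix.mul_apply, Fin.sum_univ_three, Matrix.mul_apply, Fin.sum_univ_three] at h3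
      rw [hH10, hH11, hB10, hB11, hγm1, hc0, hρ] at h3
      linarith
    have hH'1 : H' = 1 := by
      ext i j
      fin_cases i <;> fin_cases j <;>
        simp [hH00, hH10, hH20, hH01, hH11, hH21, hp0, hq0, hρ, Matrix.one_apply]
    have hQMh : QM (↑h) = 1 := by
      have h3 : P * H' * Pinv = QM (↑h) := by
        rw [hH'def]
        calc P * (Pinv * QM (↑h) * P) * Pinv
            = (P * Pinv) * QM (↑h) * (P * Pinv) := by simp only [Matrix.mul_assoc]
          _ = QM (↑h) := by rw [h2, Matrix.one_mul, Matrix.mul_one]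
      rw [hH'1, Matrix.mul_one, h2] at h3
      exact h3.symm
    have hval : (↑h : Matrix (Fin 3) (Fin 3) ℤ) = 1 := by
      apply QM_inj
      rw [hQMh, QM_one]
    exact Units.ext hval
  -- now classify an arbitrary element of G
  have main : ∀ g : GL (Fin 3) ℤ, g ∈ G →
      g = 1 ∨ g = N⁻¹ ∨ g = M⁻¹ ∨ g = (M * N)⁻¹ := by
    intro g hg
    set C' := Pinv * QM (↑g) * P with hC'def
    have hgN : QM (↑g) * A = A * QM (↑g) := by
      have h3 := hab g hg N hNG
      rw [hAdef, ← QM_mul, ← QM_mul, ← Units.val_mul, ← Units.val_mul, h3]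
    have hgM : QM (↑g) * B = B * QM (↑g) := by
      have h3 := hab g hg M hMG
      rw [hBdef, ← QM_mul, ← QM_mul, ← Units.val_mul, ← Units.val_mul, h3]
    have hcommA : C' * A' = A' * C' := by
      rw [hC'def, hA'def, conj_mul' h2, conj_mul' h2, hgN]
    have hcommB : C' * B' = B' * C' := by
      rw [hC'def, hB'def, conj_mul' h2, conj_mul' h2, hgM]
    -- column 0 of C' is fixed by A'
    have hcolC0 : A'.mulVec (fun i => C' i 0) = fun i => C' i 0 := by
      have hcol : C'.mulVec (Pi.single 0 1) = fun i => C' i 0 := by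
        funext i; simp [Matrix.mulVec_single]
      calc A'.mulVec (fun i => C' i 0) = A'.mulVec (C'.mulVec (Pi.single 0 1)) := by rw [hcol]
        _ = (A' * C').mulVec (Pi.single 0 1) := by rw [Matrix.mulVec_mulVec]
        _ = (C' * A').mulVec (Pi.single 0 1) := by rw [hcommA]
        _ = C'.mulVec (A'.mulVec (Pi.single 0 1)) := by rw [Matrix.mulVec_mulVec]
        _ = C'.mulVec (Pi.single 0 1) := by rw [hA'c0]
        _ = fun i => C' i 0 := hcol
    have hcolC1 : B'.mulVec (fun i => C' i 1) = fun i => C' i 1 := by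
      have hcol : C'.mulVec (Pi.single 1 1) = fun i => C' i 1 := by
        funext i; simp [Matrix.mulVec_single]
      calc B'.mulVec (fun i => C' i 1) = B'.mulVec (C'.mulVec (Pi.single 1 1)) := by rw [hcol]
        _ = (B' * C').mulVec (Pi.single 1 1) := by rw [Matrix.mulVec_mulVec]
        _ = (C' * B').mulVec (Pi.single 1 1) := by rw [← hcommB]
        _ = C'.mulVec (B'.mulVec (Pi.single 1 1)) := by rw [Matrix.mulVec_mulVec]
        _ = C'.mulVec (Pi.single 1 1) := by rw [hB'c1]
        _ = fun i => C' i 1 := hcol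
    have hC10 : C' 1 0 = 0 := by
      have h3 := congrFun hcolC0 1
      simp only [Matrix.mulVec, dotProduct, Fin.sum_univ_three, hA10, hA11, hb0] at h3
      linarith
    have hC20 : C' 2 0 = 0 := by
      have h3 := congrFun hcolC0 2
      simp only [Matrix.mulVec, dotProduct, Fin.sum_univ_three, hA20, hA21, hαm1] at h3
      linarith
    have hC01 : C' 0 1 = 0 := by
      have h3 := congrFun hcolC1 0
      simp only [Matrix.mulVec, dotProduct, Fin.sum_univ_three, hB00, hB01, hc0] at h3
      linarith
    have hC21 : C' 2 1 = 0 := by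
      have h3 := congrFun hcolC1 2
      simp only [Matrix.mulVec, dotProduct, Fin.sum_univ_three, hB20, hB21, hγm1] at h3
      linarith
    -- eigenvalues μ, ν
    set μ := C' 0 0 with hμdef
    set ν := C' 1 1 with hνdef
    have hC'e0 : C'.mulVec (Pi.single 0 1) = μ • (Pi.single 0 1 : Fin 3 → ℚ) := by
      funext i
      have h3 : C'.mulVec (Pi.single 0 1) i = C' i 0 := by simp [Matrix.mulVec_single]
      rw [h3]
      fin_cases i <;> simp [hC10, hC20, hμdef]
    have hC'e1 : C'.mulVec (Pi.single 1 1) = ν • (Pi.single 1 1 : Fin 3 → ℚ) := by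
      funext i
      have h3 : C'.mulVec (Pi.single 1 1) i = C' i 1 := by simp [Matrix.mulVec_single]
      rw [h3]
      fin_cases i <;> simp [hC01, hC21, hνdef]
    have hCP : QM (↑g) * P = P * C' := by
      rw [hC'def]
      calc QM (↑g) * P = (P * Pinv) * QM (↑g) * P := by rw [h2, Matrix.one_mul]
        _ = P * (Pinv * QM (↑g) * P) := by simp only [Matrix.mul_assoc]
    have hCv : (QM (↑g)).mulVec v = μ • v := by
      calc (QM (↑g)).mulVec v = (QM (↑g)).mulVec (P.mulVec (Pi.single 0 1)) := by rw [hP0]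
        _ = (QM (↑g) * P).mulVec (Pi.single 0 1) := by rw [Matrix.mulVec_mulVec]
        _ = (P * C').mulVec (Pi.single 0 1) := by rw [hCP]
        _ = P.mulVec (C'.mulVec (Pi.single 0 1)) := by rw [Matrix.mulVec_mulVec]
        _ = P.mulVec (μ • (Pi.single 0 1 : Fin 3 → ℚ)) := by rw [hC'e0]
        _ = μ • P.mulVec (Pi.single 0 1) := by rw [Matrix.mulVec_smul]
        _ = μ • v := by rw [hP0]
    have hCw : (QM (↑g)).mulVec w = ν • w := by
      calc (QM (↑g)).mulVec w = (QM (↑g)).mulVec (P.mulVec (Pi.single 1 1)) := by rw [hP1]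
        _ = (QM (↑g) * P).mulVec (Pi.single 1 1) := by rw [Matrix.mulVec_mulVec]
        _ = (P * C').mulVec (Pi.single 1 1) := by rw [hCP]
        _ = P.mulVec (C'.mulVec (Pi.single 1 1)) := by rw [Matrix.mulVec_mulVec]
        _ = P.mulVec (ν • (Pi.single 1 1 : Fin 3 → ℚ)) := by rw [hC'e1]
        _ = ν • P.mulVec (Pi.single 1 1) := by rw [Matrix.mulVec_smul]
        _ = ν • w := by rw [hP1]
    have hμ : μ = 1 ∨ μ = -1 := unit_eig g hv hCv
    have hν : ν = 1 ∨ ν = -1 := unit_eig g hw hCw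
    -- conjugates of candidate products
    have hconjN : Pinv * QM (↑(g * N)) * P = C' * A' := by
      rw [Units.val_mul, QM_mul, hC'def, hA'def, conj_mul' h2]
    have hconjM : Pinv * QM (↑(g * M)) * P = C' * B' := by
      rw [Units.val_mul, QM_mul, hC'def, hB'def, conj_mul' h2]
    have hconjMN : Pinv * QM (↑(g * (M * N))) * P = C' * (B' * A') := by
      rw [Units.val_mul, Units.val_mul, QM_mul, QM_mul, hC'def, hA'def, hB'def,
        conj_mul' h2, conj_mul' h2]
    rcases hμ with hμ1 | hμ1 <;> rcases hν with hν1 | hν1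
    · -- μ = 1, ν = 1 : g = 1
      left
      refine key1 g hg ?_ ?_
      · rw [← hC'def, hC'e0, hμ1, one_smul]
      · rw [← hC'def, hC'e1, hν1, one_smul]
    · -- μ = 1, ν = -1 : g = N⁻¹
      right; left
      have hgN1 : g * N = 1 := by
        refine key1 (g * N) (mul_mem hg hNG) ?_ ?_
        · rw [hconjN, ← Matrix.mulVec_mulVec, hA'c0, hC'e0, hμ1, one_smul]
        · rw [hconjN, ← Matrix.mulVec_mulVec, hA'c1, Matrix.mulVec_neg, hC'e1, hν1]
          simp
      exact eq_inv_of_mul_eq_one_left hgN1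
    · -- μ = -1, ν = 1 : g = M⁻¹
      right; right; left
      have hgM1 : g * M = 1 := by
        refine key1 (g * M) (mul_mem hg hMG) ?_ ?_
        · rw [hconjM, ← Matrix.mulVec_mulVec, hB'c0, Matrix.mulVec_neg, hC'e0, hμ1]
          simp
        · rw [hconjM, ← Matrix.mulVec_mulVec, hB'c1, hC'e1, hν1, one_smul]
      exact eq_inv_of_mul_eq_one_left hgM1
    · -- μ = -1, ν = -1 : g = (M * N)⁻¹
      right; right; right
      have hBA0 : (B' * A').mulVec (Pi.single 0 1) = -(Pi.single 0 1) := by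
        rw [← Matrix.mulVec_mulVec, hA'c0, hB'c0]
      have hBA1 : (B' * A').mulVec (Pi.single 1 1) = -(Pi.single 1 1) := by
        rw [← Matrix.mulVec_mulVec, hA'c1, Matrix.mulVec_neg, hB'c1]
      have hgMN1 : g * (M * N) = 1 := by
        refine key1 (g * (M * N)) (mul_mem hg (mul_mem hMG hNG)) ?_ ?_
        · rw [hconjMN, ← Matrix.mulVec_mulVec, hBA0, Matrix.mulVec_neg, hC'e0, hμ1]
          simp
        · rw [hconjMN, ← Matrix.mulVec_mulVec, hBA1, Matrix.mulVec_neg, hC'e1, hν1]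
          simp
      exact eq_inv_of_mul_eq_one_left hgMN1
  -- conclusion
  apply le_antisymm
  · intro g hg
    have hNc : N ∈ Subgroup.closure ({N, M} : Set (GL (Fin 3) ℤ)) :=
      Subgroup.subset_closure (Set.mem_insert _ _)
    have hMc : M ∈ Subgroup.closure ({N, M} : Set (GL (Fin 3) ℤ)) :=
      Subgroup.subset_closure (Set.mem_insert_of_mem _ rfl)
    rcases main g hg with rfl | rfl | rfl | rfl
    · exact one_mem _
    · exact inv_mem hNc
    · exact inv_mem hMc
    · exact inv_mem (mul_mem hMc hNc)
  · rw [Subgroup.closure_le]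
    rintro x hx
    rcases hx with rfl | hx
    · exact hNG
    · rw [Set.mem_singleton_iff] at hx
      subst hx
      exact hMG
end
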